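/- arXiv:1302.5267 — 4 statements merged into one kernel-verified Lean document; each statement's English description precedes it below -/
import Mathlib

section
/- Let q be prime and s ∈ ℕ. Fix m ∈ ℕ and polynomials k_1, ..., k_s ∈ F_q[x], not all zero. The set M_m(k_1,...,k_s) of s-tuples (f_1,...,f_s) of formal Laurent series in F_q((x^{-1})) with zero polynomial part such that ν({k_1 f_1 + ⋯ + k_s f_s}) ≤ −m has Haar measure μ_s(M_m) = q^{−(m−1)}. -/
open MeasureTheory Finset

/-- The `(n+1)`-st digit `ξ_{n+1} ∈ Z_q` of the `q`-adic expansion of a real number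
`x ∈ [0,1)`; via `x ↔ ∑_k ξ_k x^{-k}` this identifies `x` with an element of the
set `Z̄ ⊆ F_q((x^{-1}))` of Laurent series with zero polynomial part, in such a way
that the normalized Haar measure on `Z̄` corresponds to Lebesgue measure on `[0,1)`. -/
noncomputable def qDigit (q : ℕ) (x : ℝ) (n : ℕ) : ZMod q :=
  ((⌊x * (q : ℝ) ^ (n + 1)⌋ : ℤ) : ZMod q)

/-- The coefficient of `x^{-(m+1)}` of the product `k(x)·f(x)` in `F_q((x^{-1}))`,
where the Laurent series `f = ∑_{j≥0} f_j x^{-(j+1)}` is given by its coefficient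
sequence.  In particular `ν({k·f}) ≤ -M` iff `fracCoeff q k f n = 0` for all `n`
with `n + 2 ≤ M`. -/
def fracCoeff (q : ℕ) (k : Polynomial (ZMod q)) (f : ℕ → ZMod q) (m : ℕ) : ZMod q :=
  ∑ j ∈ Finset.range (k.natDegree + 1), k.coeff j * f (m + j)

/-- The (monic) gcd of the tuple `k` is `1`: every common divisor is a unit. -/
def GcdOne {q s : ℕ} (k : Fin s → Polynomial (ZMod q)) : Prop :=
  ∀ d : Polynomial (ZMod q), (∀ i, d ∣ k i) → IsUnit d

lemma qDigit_eq {q : ℕ} (hq : 1 < q) {N n : ℕ} (hn : n ≤ N)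
    {a : ℕ} (ha : a < q ^ (N + 1)) {x : ℝ}
    (h1 : (a : ℝ) / (q : ℝ) ^ (N + 1) ≤ x) (h2 : x < ((a : ℝ) + 1) / (q : ℝ) ^ (N + 1)) :
    qDigit q x n = ((a / q ^ (N - n) : ℕ) : ZMod q) := by
  have hq0 : (0 : ℝ) < (q : ℝ) := by exact_mod_cast Nat.lt_of_lt_of_le Nat.zero_lt_one hq.le
  set p : ℕ := q ^ (N - n) with hp
  have hppos : 0 < p := pow_pos (by omega : 0 < q) _
  have hsplit : q ^ (N + 1) = p * q ^ (n + 1) := by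
    rw [hp, ← pow_add]; congr 1; omega
  have hpR : (0 : ℝ) < (p : ℝ) := by exact_mod_cast hppos
  have hqn : (0 : ℝ) < (q : ℝ) ^ (n + 1) := by positivity
  have hQR : ((q : ℝ)) ^ (N + 1) = (p : ℝ) * (q : ℝ) ^ (n + 1) := by
    exact_mod_cast congrArg (Nat.cast : ℕ → ℝ) hsplit
  have hfloor : ⌊x * (q : ℝ) ^ (n + 1)⌋ = (a / p : ℕ) := by
    rw [Int.floor_eq_iff]
    constructor
    · have hle : ((a / p : ℕ) : ℝ) ≤ (a : ℝ) / p := by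
        rw [le_div_iff₀ hpR]
        exact_mod_cast Nat.div_mul_le_self a p
      calc ((a / p : ℕ) : ℝ) ≤ (a : ℝ) / p := hle
        _ = (a : ℝ) / (q : ℝ) ^ (N + 1) * (q : ℝ) ^ (n + 1) := by
            rw [hQR]; field_simp
        _ ≤ x * (q : ℝ) ^ (n + 1) := by
            apply mul_le_mul_of_nonneg_right h1 hqn.le
    · have hub : ((a : ℝ) + 1) / p ≤ ((a / p : ℕ) : ℝ) + 1 := by
        rw [div_le_iff₀ hpR]
        have : a + 1 ≤ (a / p + 1) * p := by
          have h3 := Nat.mod_lt a hppos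
          have h4 := Nat.div_add_mod a p
          calc a + 1 = p * (a / p) + a % p + 1 := by omega
            _ ≤ p * (a / p) + p := by omega
            _ = (a / p + 1) * p := by ring
        calc ((a : ℝ) + 1) = ((a + 1 : ℕ) : ℝ) := by push_cast; ring
          _ ≤ (((a / p + 1) * p : ℕ) : ℝ) := by exact_mod_cast this
          _ = (((a / p : ℕ) : ℝ) + 1) * p := by push_cast; ring
      calc x * (q : ℝ) ^ (n + 1) < ((a : ℝ) + 1) / (q : ℝ) ^ (N + 1) * (q : ℝ) ^ (n + 1) := by
            apply mul_lt_mul_of_pos_right h2 hqn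
        _ = ((a : ℝ) + 1) / p := by rw [hQR]; field_simp
        _ ≤ ((a / p : ℕ) : ℝ) + 1 := hub
  rw [qDigit, hfloor]
  norm_cast

def dig {q : ℕ} (N : ℕ) (g : Fin (N + 1) → ZMod q) (r : ℕ) : ZMod q :=
  if h : r < N + 1 then g ⟨N - r, by omega⟩ else 0

def Lfun {q s : ℕ} (k : Fin s → Polynomial (ZMod q)) (N m : ℕ)
    (g : Fin s → Fin (N + 1) → ZMod q) : Fin (m - 1) → ZMod q :=
  fun n => ∑ i, fracCoeff q (k i) (dig N (g i)) (n : ℕ)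

lemma fracCoeff_congr {q : ℕ} (k : Polynomial (ZMod q)) {f f' : ℕ → ZMod q} {n : ℕ}
    (h : ∀ r, n ≤ r → r ≤ n + k.natDegree → f r = f' r) :
    fracCoeff q k f n = fracCoeff q k f' n :=
  Finset.sum_congr rfl fun j hj => by
    rw [h (n + j) (by omega)
      (Nat.add_le_add_left (Nat.lt_succ_iff.mp (Finset.mem_range.mp hj)) n)]

def wext {q m : ℕ} (w : Fin (m - 1) → ZMod q) (r : ℕ) : ZMod q :=
  if h : r < m - 1 then w ⟨r, h⟩ else 0

def Gmap {q s : ℕ} (m N : ℕ) (i₀ : Fin s) (w : Fin (m - 1) → ZMod q) :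
    Fin s → Fin (N + 1) → ZMod q :=
  fun i j => if i = i₀ ∧ (j : ℕ) ≤ m - 2 then wext w (m - 2 - (j : ℕ)) else 0

lemma Lfun_surjective {q s : ℕ} (hq : q.Prime) (k : Fin s → Polynomial (ZMod q))
    (D N m : ℕ) (i₀ : Fin s) (hk0 : k i₀ ≠ 0)
    (hDeq : (k i₀).natDegree = D) (hN : N = m - 2 + D) (hm : 1 ≤ m) :
    Function.Surjective (Lfun k N m) := by
  haveI := Fact.mk hq
  haveI : NeZero q := ⟨hq.ne_zero⟩
  rcases Nat.lt_or_ge m 2 with hm2 | hm2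
  · intro t
    exact ⟨0, funext fun n => absurd n.isLt (by omega)⟩
  set c : ZMod q := (k i₀).coeff D with hc
  have hc0 : c ≠ 0 := by
    rw [hc, ← hDeq, Polynomial.coeff_natDegree]
    exact Polynomial.leadingCoeff_ne_zero.mpr hk0
  have hdig : ∀ (w : Fin (m - 1) → ZMod q) (r : ℕ), r ≤ N →
      dig N (Gmap m N i₀ w i₀) r = if D ≤ r then wext w (r - D) else 0 := by
    intro w r hr
    rw [dig, dif_pos (by omega)]
    show (if i₀ = i₀ ∧ (N - r) ≤ m - 2 then wext w (m - 2 - (N - r)) else 0) = _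
    by_cases hDr : D ≤ r
    · rw [if_pos ⟨rfl, by omega⟩, if_pos hDr]
      congr 1
      omega
    · rw [if_neg, if_neg hDr]
      rintro ⟨-, h2⟩
      omega
  have hkey : ∀ (w : Fin (m - 1) → ZMod q) (n' : Fin (m - 1)),
      Lfun k N m (Gmap m N i₀ w) n' =
        ∑ j ∈ Finset.range (D + 1), (k i₀).coeff j *
          (if D ≤ (n' : ℕ) + j then wext w ((n' : ℕ) + j - D) else 0) := by
    intro w n'
    have hn' : (n' : ℕ) < m - 1 := n'.isLt
    simp only [Lfun]
    rw [Finset.sum_eq_single i₀]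
    · rw [fracCoeff, hDeq]
      refine Finset.sum_congr rfl fun j hj => ?_
      have hj' := Finset.mem_range.mp hj
      rw [hdig w _ (by omega)]
    · intro i _ hi
      rw [fracCoeff]
      refine Finset.sum_eq_zero fun j _ => ?_
      have hz : dig N (Gmap m N i₀ w i) ((n' : ℕ) + j) = 0 := by
        rw [dig]
        split
        · show (if i = i₀ ∧ _ ≤ m - 2 then _ else 0) = 0
          rw [if_neg (fun h => hi h.1)]
        · rfl
      rw [hz, mul_zero]
    · intro h
      exact absurd (Finset.mem_univ i₀) h
  have hinj : Function.Injective (fun w => Lfun k N m (Gmap m N i₀ w)) := by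
    intro w v hwv
    suffices h : ∀ n (hn : n < m - 1), w ⟨n, hn⟩ = v ⟨n, hn⟩ by
      funext n'
      have := h n' n'.isLt
      simpa using this
    intro n
    induction n using Nat.strong_induction_on with
    | _ n ih =>
      intro hn
      have h1 := congrFun hwv ⟨n, hn⟩
      simp only [hkey w, hkey v] at h1
      rw [Finset.sum_range_succ, Finset.sum_range_succ] at h1
      have hD' : D ≤ (n : ℕ) + D := Nat.le_add_left D n
      rw [if_pos hD', if_pos hD', Nat.add_sub_cancel] at h1
      have hsums : (∑ j ∈ Finset.range D, (k i₀).coeff j *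
            (if D ≤ n + j then wext w (n + j - D) else 0)) =
          ∑ j ∈ Finset.range D, (k i₀).coeff j *
            (if D ≤ n + j then wext v (n + j - D) else 0) := by
        refine Finset.sum_congr rfl fun j hj => ?_
        have hj' := Finset.mem_range.mp hj
        congr 1
        split
        · rw [wext, wext]
          by_cases hlt : n + j - D < m - 1
          · rw [dif_pos hlt, dif_pos hlt]
            exact ih (n + j - D) (by omega) hlt
          · rw [dif_neg hlt, dif_neg hlt]
        · rfl
      rw [hsums] at h1
      have h2 : c * wext w n = c * wext v n := by
        rw [← hc] at h1
        exact add_left_cancel h1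
      have h3 : wext w n = wext v n := mul_left_cancel₀ hc0 h2
      rw [wext, wext, dif_pos hn, dif_pos hn] at h3
      exact h3
  intro t
  obtain ⟨w, hw⟩ := (Finite.injective_iff_bijective.mp hinj).2 t
  exact ⟨Gmap m N i₀ w, hw⟩

lemma Lfun_add {q s : ℕ} (k : Fin s → Polynomial (ZMod q)) (N m : ℕ)
    (g g' : Fin s → Fin (N + 1) → ZMod q) :
    Lfun k N m (g + g') = Lfun k N m g + Lfun k N m g' := by
  funext n
  show (∑ i, fracCoeff q (k i) (dig N ((g + g') i)) (n : ℕ)) = _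
  have : ∀ i, fracCoeff q (k i) (dig N ((g + g') i)) (n : ℕ) =
      fracCoeff q (k i) (dig N (g i)) (n : ℕ) + fracCoeff q (k i) (dig N (g' i)) (n : ℕ) := by
    intro i
    rw [fracCoeff, fracCoeff, fracCoeff, ← Finset.sum_add_distrib]
    refine Finset.sum_congr rfl fun j _ => ?_
    have hdig : dig N ((g + g') i) ((n : ℕ) + j) =
        dig N (g i) ((n : ℕ) + j) + dig N (g' i) ((n : ℕ) + j) := by
      rw [dig, dig, dig]
      split
      · rfl
      · rw [add_zero]
    rw [hdig, mul_add]
  rw [Finset.sum_congr rfl fun i _ => this i, Finset.sum_add_distrib]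
  rfl

lemma card_ker_mul {q s : ℕ} (hq : q.Prime) (k : Fin s → Polynomial (ZMod q))
    (D N m : ℕ) (i₀ : Fin s) (hk0 : k i₀ ≠ 0)
    (hDeq : (k i₀).natDegree = D) (hN : N = m - 2 + D) (hm : 1 ≤ m) :
    Nat.card {g : Fin s → Fin (N + 1) → ZMod q // Lfun k N m g = 0} * q ^ (m - 1) =
      q ^ ((N + 1) * s) := by
  haveI := Fact.mk hq
  haveI : NeZero q := ⟨hq.ne_zero⟩
  set L : (Fin s → Fin (N + 1) → ZMod q) →+ (Fin (m - 1) → ZMod q) :=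
    AddMonoidHom.mk' (Lfun k N m) (Lfun_add k N m) with hL
  have hsurj : Function.Surjective L := Lfun_surjective hq k D N m i₀ hk0 hDeq hN hm
  have h1 : Nat.card {g : Fin s → Fin (N + 1) → ZMod q // Lfun k N m g = 0} =
      Nat.card L.ker := by
    apply Nat.card_congr
    refine Equiv.subtypeEquivRight fun g => ?_
    rw [AddMonoidHom.mem_ker]
    exact Iff.rfl
  have h2 : Nat.card (Fin s → Fin (N + 1) → ZMod q) =
      Nat.card ((Fin s → Fin (N + 1) → ZMod q) ⧸ L.ker) * Nat.card L.ker :=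
    AddSubgroup.card_eq_card_quotient_mul_card_addSubgroup L.ker
  have h3 : Nat.card ((Fin s → Fin (N + 1) → ZMod q) ⧸ L.ker) =
      Nat.card (Fin (m - 1) → ZMod q) :=
    Nat.card_congr (QuotientAddGroup.quotientKerEquivOfSurjective L hsurj).toEquiv
  have h4 : Nat.card (Fin (m - 1) → ZMod q) = q ^ (m - 1) := by
    simp [Nat.card_eq_fintype_card, ZMod.card]
  have h5 : Nat.card (Fin s → Fin (N + 1) → ZMod q) = q ^ ((N + 1) * s) := by
    simp [Nat.card_eq_fintype_card, ZMod.card, ← pow_mul]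
  rw [h1, mul_comm]
  rw [h2, h3, h4] at h5
  exact h5

def enc {q : ℕ} (N : ℕ) (a : Fin (q ^ (N + 1))) : Fin (N + 1) → ZMod q :=
  fun j => (((a : ℕ) / q ^ (j : ℕ) % q : ℕ) : ZMod q)

lemma dig_enc {q N : ℕ} (a : Fin (q ^ (N + 1))) {r : ℕ} (hr : r ≤ N) :
    dig N (enc N a) r = (((a : ℕ) / q ^ (N - r) : ℕ) : ZMod q) := by
  rw [dig, dif_pos (by omega)]
  show (((a : ℕ) / q ^ (N - r) % q : ℕ) : ZMod q) = _
  rw [ZMod.natCast_mod]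

lemma encs_bijective {q : ℕ} (hq : q.Prime) (N s : ℕ) :
    Function.Bijective (fun (a : Fin s → Fin (q ^ (N + 1))) (i : Fin s) => enc N (a i)) := by
  haveI : NeZero q := ⟨hq.ne_zero⟩
  rw [Fintype.bijective_iff_injective_and_card]
  constructor
  · intro a b hab
    funext i
    have habi := congrFun hab i
    have : finFunctionFinEquiv.symm (a i) = finFunctionFinEquiv.symm (b i) := by
      funext j
      have h1 := congrFun habi j
      simp only [enc] at h1
      have hlt : (a i : ℕ) / q ^ (j : ℕ) % q < q := Nat.mod_lt _ hq.pos
      have hlt' : (b i : ℕ) / q ^ (j : ℕ) % q < q := Nat.mod_lt _ hq.pos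
      have h2 := congrArg ZMod.val h1
      rw [ZMod.val_natCast_of_lt hlt, ZMod.val_natCast_of_lt hlt'] at h2
      exact Fin.ext h2
    have := congrArg finFunctionFinEquiv this
    simpa using this
  · simp [ZMod.card]

/-- For `m ≥ 1` and polynomials `k_1, …, k_s`, not all zero, the set
`M_m(k_1,…,k_s)` of tuples `(f_1,…,f_s) ∈ Z̄^s` with
`ν({k_1 f_1 + ⋯ + k_s f_s}) ≤ -m` has Haar measure `q^{-(m-1)}`. -/
theorem measure_M_m (q : ℕ) (hq : q.Prime) (s : ℕ) (hs : 1 ≤ s) (m : ℕ) (hm : 1 ≤ m)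
    (k : Fin s → Polynomial (ZMod q)) (hk : ¬ ∀ i, k i = 0) :
    volume {f : Fin s → ℝ | (∀ i, f i ∈ Set.Ico (0:ℝ) 1) ∧
        ∀ n : ℕ, n + 2 ≤ m → ∑ i, fracCoeff q (k i) (qDigit q (f i)) n = 0} =
      ((q : ENNReal) ^ (m - 1))⁻¹ := by
  haveI := Fact.mk hq
  haveI : NeZero q := ⟨hq.ne_zero⟩
  classical
  push_neg at hk
  obtain ⟨i₁, hi₁⟩ := hk
  set D : ℕ := univ.sup (fun i => (k i).natDegree) with hD
  have hDle : ∀ i, (k i).natDegree ≤ D := fun i => by rw [hD]; exact Finset.le_sup (f := fun i => (k i).natDegree) (mem_univ i)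
  obtain ⟨i₀, hk0, hDeq⟩ : ∃ i₀, k i₀ ≠ 0 ∧ (k i₀).natDegree = D := by
    haveI : Nonempty (Fin s) := ⟨⟨0, hs⟩⟩
    obtain ⟨i₂, -, hi₂⟩ :=
      Finset.exists_mem_eq_sup univ univ_nonempty (fun i => (k i).natDegree)
    by_cases h : k i₂ = 0
    · refine ⟨i₁, hi₁, ?_⟩
      have hD0 : D = 0 := by rw [hD, hi₂, h]; simp
      have := hDle i₁
      omega
    · exact ⟨i₂, h, hi₂.symm⟩
  set N : ℕ := m - 2 + D with hN
  set Q : ℕ := q ^ (N + 1) with hQ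
  have hQpos : 0 < Q := pow_pos hq.pos _
  have hQR : ((Q : ℕ) : ℝ) = (q : ℝ) ^ (N + 1) := by rw [hQ]; push_cast; ring
  have hQRpos : (0 : ℝ) < (Q : ℝ) := by exact_mod_cast hQpos
  set P : (Fin s → Fin Q) → Prop :=
    fun a => Lfun k N m (fun i => enc N (a i)) = 0 with hP
  set C : (Fin s → Fin Q) → Set (Fin s → ℝ) := fun a =>
    Set.pi Set.univ (fun i => Set.Ico (((a i : ℕ) : ℝ) / (Q : ℝ))
      ((((a i : ℕ) : ℝ) + 1) / (Q : ℝ))) with hC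
  -- bridge
  have hbridge : ∀ (f : Fin s → ℝ) (a : Fin s → Fin Q),
      (∀ i, ((a i : ℕ) : ℝ) / (Q : ℝ) ≤ f i ∧ f i < (((a i : ℕ) : ℝ) + 1) / (Q : ℝ)) →
      ((∀ n : ℕ, n + 2 ≤ m → ∑ i, fracCoeff q (k i) (qDigit q (f i)) n = 0) ↔ P a) := by
    intro f a hfa
    have hfc : ∀ (i : Fin s) (n : ℕ), n + 2 ≤ m →
        fracCoeff q (k i) (qDigit q (f i)) n = fracCoeff q (k i) (dig N (enc N (a i))) n := by
      intro i n hn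
      refine fracCoeff_congr (k i) fun r hr1 hr2 => ?_
      have hrN : r ≤ N := by have := hDle i; omega
      have ha : (a i : ℕ) < q ^ (N + 1) := hQ ▸ (a i).isLt
      rw [qDigit_eq hq.one_lt hrN ha (by rw [← hQR]; exact (hfa i).1)
          (by rw [← hQR]; exact (hfa i).2), dig_enc _ hrN]
    constructor
    · intro h
      funext n'
      have hn2 : (n' : ℕ) + 2 ≤ m := by have := n'.isLt; omega
      show (∑ i, fracCoeff q (k i) (dig N (enc N (a i))) (n' : ℕ)) = 0
      rw [← Finset.sum_congr rfl fun i _ => hfc i (n' : ℕ) hn2]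
      exact h _ hn2
    · intro h n hn2
      have hn' : n < m - 1 := by omega
      have := congrFun h ⟨n, hn'⟩
      rw [Finset.sum_congr rfl fun i _ => hfc i n hn2]
      exact this
  -- set equality
  have hset : {f : Fin s → ℝ | (∀ i, f i ∈ Set.Ico (0:ℝ) 1) ∧
      ∀ n : ℕ, n + 2 ≤ m → ∑ i, fracCoeff q (k i) (qDigit q (f i)) n = 0} =
      ⋃ a ∈ univ.filter P, C a := by
    ext f
    simp only [Set.mem_setOf_eq, Set.mem_iUnion, mem_filter, mem_univ, true_and]
    constructor
    · rintro ⟨hf1, hf2⟩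
      have hafin : ∀ i, (⌊f i * Q⌋).toNat < Q := by
        intro i
        have h0 : (0 : ℤ) ≤ ⌊f i * Q⌋ :=
          Int.floor_nonneg.mpr (mul_nonneg (hf1 i).1 hQRpos.le)
        have hlt : ⌊f i * Q⌋ < (Q : ℤ) := by
          rw [Int.floor_lt]
          calc f i * Q < 1 * Q := by
                apply mul_lt_mul_of_pos_right (hf1 i).2 hQRpos
            _ = ((Q : ℤ) : ℝ) := by push_cast; ring
        omega
      set a : Fin s → Fin Q := fun i => ⟨(⌊f i * Q⌋).toNat, hafin i⟩ with ha
      have hmem : ∀ i, ((a i : ℕ) : ℝ) / (Q : ℝ) ≤ f i ∧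
          f i < (((a i : ℕ) : ℝ) + 1) / (Q : ℝ) := by
        intro i
        have h0 : (0 : ℤ) ≤ ⌊f i * Q⌋ :=
          Int.floor_nonneg.mpr (mul_nonneg (hf1 i).1 hQRpos.le)
        have hcast : ((a i : ℕ) : ℝ) = (⌊f i * Q⌋ : ℝ) := by
          show (((⌊f i * Q⌋).toNat : ℕ) : ℝ) = _
          exact_mod_cast congrArg (fun z : ℤ => (z : ℝ)) (Int.toNat_of_nonneg h0)
        constructor
        · rw [div_le_iff₀ hQRpos, hcast]
          exact Int.floor_le _
        · rw [lt_div_iff₀ hQRpos, hcast]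
          have := Int.lt_floor_add_one (f i * Q)
          linarith
      refine ⟨a, (hbridge f a hmem).mp hf2, ?_⟩
      rw [hC]
      intro i _
      exact ⟨(hmem i).1, (hmem i).2⟩
    · rintro ⟨a, hPa, hfa⟩
      have hmem : ∀ i, ((a i : ℕ) : ℝ) / (Q : ℝ) ≤ f i ∧
          f i < (((a i : ℕ) : ℝ) + 1) / (Q : ℝ) := by
        intro i
        have := hfa i (Set.mem_univ i)
        exact ⟨this.1, this.2⟩
      constructor
      · intro i
        constructor
        · refine le_trans ?_ (hmem i).1
          positivity
        · refine lt_of_lt_of_le (hmem i).2 ?_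
          rw [div_le_one hQRpos]
          have : (a i : ℕ) + 1 ≤ Q := (a i).isLt
          exact_mod_cast this
      · exact (hbridge f a hmem).mpr hPa
  rw [hset]
  -- measure of the union
  have hmeas : ∀ a ∈ univ.filter P, MeasurableSet (C a) := by
    intro a _
    exact MeasurableSet.univ_pi fun i => measurableSet_Ico
  have hdisj : Set.PairwiseDisjoint (↑(univ.filter P)) C := by
    intro a _ b _ hab
    rw [Function.onFun, Set.disjoint_left]
    intro x hxa hxb
    apply hab
    funext i
    have h1 := hxa i (Set.mem_univ i)
    have h2 := hxb i (Set.mem_univ i)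
    have hab1 : ((a i : ℕ) : ℝ) < ((b i : ℕ) : ℝ) + 1 := by
      have := lt_of_le_of_lt h1.1 h2.2
      rwa [div_lt_div_iff₀ hQRpos hQRpos, mul_lt_mul_iff_left₀ hQRpos] at this
    have hab2 : ((b i : ℕ) : ℝ) < ((a i : ℕ) : ℝ) + 1 := by
      have := lt_of_le_of_lt h2.1 h1.2
      rwa [div_lt_div_iff₀ hQRpos hQRpos, mul_lt_mul_iff_left₀ hQRpos] at this
    have h3 : (a i : ℕ) < (b i : ℕ) + 1 := by exact_mod_cast hab1
    have h4 : (b i : ℕ) < (a i : ℕ) + 1 := by exact_mod_cast hab2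
    exact Fin.ext (by omega)
  rw [measure_biUnion_finset hdisj hmeas]
  have hCvol : ∀ a, volume (C a) = ((Q : ENNReal))⁻¹ ^ s := by
    intro a
    rw [hC]
    rw [volume_pi_pi]
    have hIco : ∀ i : Fin s, volume (Set.Ico (((a i : ℕ) : ℝ) / (Q : ℝ))
        ((((a i : ℕ) : ℝ) + 1) / (Q : ℝ))) = ((Q : ENNReal))⁻¹ := by
      intro i
      rw [Real.volume_Ico]
      have : (((a i : ℕ) : ℝ) + 1) / (Q : ℝ) - ((a i : ℕ) : ℝ) / (Q : ℝ) = ((Q : ℝ))⁻¹ := by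
        field_simp
        ring
      rw [this, ENNReal.ofReal_inv_of_pos hQRpos, ENNReal.ofReal_natCast]
    rw [Finset.prod_congr rfl fun i _ => hIco i]
    simp
  rw [Finset.sum_congr rfl fun a _ => hCvol a, Finset.sum_const, nsmul_eq_mul]
  -- cardinality
  have hcard : (univ.filter P).card = Nat.card {g : Fin s → Fin (N + 1) → ZMod q //
      Lfun k N m g = 0} := by
    rw [← Fintype.card_subtype]
    rw [Fintype.card_eq_nat_card]
    apply Nat.card_congr
    exact (Equiv.ofBijective _ (encs_bijective hq N s)).subtypeEquiv fun a => Iff.rfl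
  set K : ℕ := Nat.card {g : Fin s → Fin (N + 1) → ZMod q // Lfun k N m g = 0} with hK
  have hKmul : K * q ^ (m - 1) = q ^ ((N + 1) * s) :=
    card_ker_mul hq k D N m i₀ hk0 hDeq hN hm
  rw [hcard]
  -- final ENNReal arithmetic
  have hqE0 : (q : ENNReal) ≠ 0 := by exact_mod_cast hq.ne_zero
  have hK0 : (K : ENNReal) ≠ 0 := by
    have : K ≠ 0 := by
      intro h
      rw [h, zero_mul] at hKmul
      exact (pow_ne_zero _ hq.ne_zero) hKmul.symm
    exact_mod_cast this
  have hKtop : (K : ENNReal) ≠ ⊤ := ENNReal.natCast_ne_top K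
  have hQE : ((Q : ℕ) : ENNReal) = (q : ENNReal) ^ (N + 1) := by rw [hQ]; push_cast; ring
  have hcastmul : (K : ENNReal) * (q : ENNReal) ^ (m - 1) = (q : ENNReal) ^ ((N + 1) * s) := by
    exact_mod_cast congrArg (Nat.cast : ℕ → ENNReal) hKmul
  rw [hQE, ← ENNReal.inv_pow, ← pow_mul, ← hcastmul]
  rw [ENNReal.mul_inv (Or.inl hK0) (Or.inl hKtop), ← mul_assoc,
    ENNReal.mul_inv_cancel hK0 hKtop, one_mul]
end

section
/- Let q be prime, m ∈ ℕ with m ≥ 2. For tuples (k_1,...,k_s) of nonzero polynomials over F_q with gcd 1 and degrees r_1,...,r_s summing to m, and polynomials β_1,...,β_s (not all zero, each zero or coprime to the corresponding k_j), the Haar measure of the set of (f_1,...,f_s) ∈ Z̄^s satisfying both ν({k_1 f_1 + ⋯ + k_s f_s}) ≤ −m and ν({(k_1+β_1) f_1 + ⋯ + (k_s+β_s) f_s}) ≤ −⌊m/2⌋ equals q^{−(m−1)} · q^{−(⌊m/2⌋−1)}, i.e., the two events are independent, provided (k_1,...,k_s) ≠ (1,...,1). -/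
open MeasureTheory Finset

lemma nat_expansion {q : ℕ} (hq : 2 ≤ q) : ∀ N, ∀ c, c < q^N →
    ∑ j ∈ range N, (c / q^j % q) * q^j = c := by
  intro N
  induction N with
  | zero => intro c hc; simp at hc ⊢; omega
  | succ N ih =>
    intro c hc
    rw [Finset.sum_range_succ']
    have h1 : ∀ j, c / q^(j+1) % q * q^(j+1) = q * ((c/q) / q^j % q * q^j) := by
      intro j
      have : c / q^(j+1) = (c/q) / q^j := by
        rw [Nat.div_div_eq_div_mul, pow_succ']
      rw [this, pow_succ]; ring
    simp only [h1, pow_zero, mul_one]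
    rw [← Finset.mul_sum, ih (c/q) (by
      rw [Nat.div_lt_iff_lt_mul (by omega)]
      calc c < q^(N+1) := hc
      _ = q^N * q := by rw [pow_succ])]
    simp [Nat.div_add_mod]

lemma nat_sum_lt {q : ℕ} (hq : 2 ≤ q) (e : ℕ → ℕ) (he : ∀ j, e j < q) :
    ∀ N, ∑ j ∈ range N, e j * q^j < q^N := by
  intro N
  induction N with
  | zero => simp
  | succ N ih =>
    rw [Finset.sum_range_succ, pow_succ]
    have heN := he N
    have h1 : e N * q^N ≤ (q-1) * q^N :=
      Nat.mul_le_mul_right (q^N) (show e N ≤ q - 1 by omega)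
    have h2 : 0 < q^N := Nat.pow_pos (by omega)
    calc ∑ j ∈ range N, e j * q^j + e N * q^N < q^N + (q-1) * q^N := by omega
    _ = q^N * q := by
        have : q^N + (q-1) * q^N = q^N * (1 + (q-1)) := by ring
        rw [this]; congr 1; omega

lemma nat_digit_sum {q : ℕ} (hq : 2 ≤ q) (e : ℕ → ℕ) (he : ∀ j, e j < q) :
    ∀ N, ∀ t, t < N → (∑ j ∈ range N, e j * q^j) / q^t % q = e t := by
  intro N
  induction N with
  | zero => omega
  | succ N ih =>
    intro t ht
    rw [Finset.sum_range_succ]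
    rcases Nat.lt_or_ge t N with h | h
    · have hqt : (0:ℕ) < q^t := Nat.pow_pos (by omega)
      have hsplit : e N * q^N = (e N * q^(N-t-1) * q) * q^t := by
        rw [mul_assoc, mul_assoc, ← pow_succ', ← pow_add]
        congr 2
        omega
      rw [hsplit, Nat.add_mul_div_right _ _ hqt, Nat.add_mul_mod_self_right]
      exact ih t h
    · have ht' : t = N := by omega
      subst ht'
      have hS := nat_sum_lt hq e he t
      have hqN : (0:ℕ) < q^t := Nat.pow_pos (by omega)
      rw [Nat.add_mul_div_right _ _ hqN, Nat.div_eq_of_lt hS, Nat.zero_add,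
        Nat.mod_eq_of_lt (he t)]

/-- little-endian digit function of a big-endian digit vector -/
def eD {q N : ℕ} (d : Fin N → ZMod q) (j : ℕ) : ℕ :=
  if h : N - 1 - j < N then (d ⟨N - 1 - j, h⟩).val else 0

def encodeD {q N : ℕ} (d : Fin N → ZMod q) : ℕ := ∑ j ∈ range N, eD d j * q^j

lemma eD_lt {q N : ℕ} (hq : 2 ≤ q) (d : Fin N → ZMod q) (j : ℕ) : eD d j < q := by
  have : NeZero q := ⟨by omega⟩
  unfold eD
  split
  · exact ZMod.val_lt _
  · omega

lemma encodeD_lt {q N : ℕ} (hq : 2 ≤ q) (d : Fin N → ZMod q) : encodeD d < q^N :=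
  nat_sum_lt hq _ (eD_lt hq d) N

lemma qDigit_eq_of_natFloor {q : ℕ} (hq : 2 ≤ q) {N : ℕ} {x : ℝ} (hx : 0 ≤ x)
    {n : ℕ} (hn : n < N) :
    qDigit q x n = ((⌊x * (q:ℝ)^N⌋₊ / q^(N-1-n) : ℕ) : ZMod q) := by
  have hq0 : (0:ℝ) < (q:ℝ) := by positivity
  have hxq : 0 ≤ x * (q:ℝ)^(n+1) := by positivity
  have h1 : x * (q:ℝ)^(n+1) = x * (q:ℝ)^N / ((q^(N-1-n) : ℕ) : ℝ) := by
    push_cast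
    rw [eq_div_iff (by positivity), mul_assoc, ← pow_add]
    congr 2
    omega
  have h2 : ⌊x * (q:ℝ)^(n+1)⌋ = ((⌊x * (q:ℝ)^(n+1)⌋₊ : ℕ) : ℤ) :=
    (Int.natCast_floor_eq_floor hxq).symm
  rw [qDigit, h2, h1, Nat.floor_div_natCast]
  norm_cast

lemma cyl_eq {q : ℕ} (hq : 2 ≤ q) {N : ℕ} (d : Fin N → ZMod q) :
    {x : ℝ | x ∈ Set.Ico (0:ℝ) 1 ∧ ∀ n : Fin N, qDigit q x (n:ℕ) = d n}
      = Set.Ico ((encodeD d : ℝ)/(q:ℝ)^N) (((encodeD d : ℝ)+1)/(q:ℝ)^N) := by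
  have : NeZero q := ⟨by omega⟩
  have hqN : (0:ℝ) < (q:ℝ)^N := by positivity
  have hC := encodeD_lt hq d
  ext x
  simp only [Set.mem_setOf_eq, Set.mem_Ico]
  constructor
  · rintro ⟨⟨hx0, hx1⟩, hd⟩
    set c := ⌊x * (q:ℝ)^N⌋₊ with hc
    have hcle : (c:ℝ) ≤ x * (q:ℝ)^N := Nat.floor_le (by positivity)
    have hclt : x * (q:ℝ)^N < (c:ℝ) + 1 := Nat.lt_floor_add_one _
    have hcN : c < q^N := by
      rw [hc, Nat.floor_lt (by positivity)]
      calc x * (q:ℝ)^N < 1 * (q:ℝ)^N := by nlinarith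
      _ = ((q^N : ℕ) : ℝ) := by push_cast; ring
    -- digits of c are eD d
    have hdig : ∀ j, j < N → c / q^j % q = eD d j := by
      intro j hj
      have hn : N - 1 - j < N := by omega
      have := hd ⟨N - 1 - j, hn⟩
      rw [qDigit_eq_of_natFloor hq hx0 (show N - 1 - j < N from hn)] at this
      have hj' : N - 1 - (N - 1 - j) = j := by omega
      rw [hj'] at this
      have hval := congrArg ZMod.val this
      rw [ZMod.val_natCast] at hval
      rw [hval]
      unfold eD
      rw [dif_pos hn]
    have hcenc : c = encodeD d := by
      have h1 := nat_expansion hq N c hcN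
      rw [encodeD, ← h1]
      exact Finset.sum_congr rfl (fun j hj => by
        rw [hdig j (Finset.mem_range.mp hj)])
    rw [← hcenc]
    constructor
    · rw [div_le_iff₀ hqN]; linarith
    · rw [lt_div_iff₀ hqN]; linarith
  · rintro ⟨hx0, hx1⟩
    have hxpos : 0 ≤ x := le_trans (by positivity) hx0
    have hb1 : (encodeD d : ℝ) ≤ x * (q:ℝ)^N := by
      rw [div_le_iff₀ hqN] at hx0; linarith
    have hb2 : x * (q:ℝ)^N < (encodeD d : ℝ) + 1 := by
      rw [lt_div_iff₀ hqN] at hx1; linarith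
    have hfl : ⌊x * (q:ℝ)^N⌋₊ = encodeD d := by
      rw [Nat.floor_eq_iff (by positivity)]
      exact ⟨hb1, hb2⟩
    have hx1' : x < 1 := by
      rw [lt_div_iff₀ hqN] at hx1
      have : (encodeD d : ℝ) + 1 ≤ (q:ℝ)^N := by
        have : (encodeD d + 1 : ℕ) ≤ q^N := hC
        calc (encodeD d : ℝ) + 1 = ((encodeD d + 1 : ℕ) : ℝ) := by push_cast; ring
        _ ≤ ((q^N : ℕ) : ℝ) := by exact_mod_cast this
        _ = (q:ℝ)^N := by push_cast; ring
      nlinarith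
    refine ⟨⟨hxpos, hx1'⟩, ?_⟩
    intro n
    rw [qDigit_eq_of_natFloor hq hxpos n.isLt, hfl]
    have h1 : encodeD d / q^(N-1-(n:ℕ)) % q = eD d (N-1-(n:ℕ)) :=
      nat_digit_sum hq _ (eD_lt hq d) N _ (by omega)
    have h2 : eD d (N-1-(n:ℕ)) = (d n).val := by
      unfold eD
      have hn : N - 1 - (N-1-(n:ℕ)) < N := by omega
      rw [dif_pos hn]
      congr 2
      apply Fin.ext
      simp only []
      omega
    calc ((encodeD d / q^(N-1-(n:ℕ)) : ℕ) : ZMod q)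
        = ((encodeD d / q^(N-1-(n:ℕ)) % q : ℕ) : ZMod q) := by
          rw [ZMod.natCast_mod]
      _ = (((d n).val : ℕ) : ZMod q) := by rw [h1, h2]
      _ = d n := by simp [ZMod.natCast_val, ZMod.cast_id]

lemma volume_cylSet {q : ℕ} (hq : 2 ≤ q) {N : ℕ} (d : Fin N → ZMod q) :
    volume {x : ℝ | x ∈ Set.Ico (0:ℝ) 1 ∧ ∀ n : Fin N, qDigit q x (n:ℕ) = d n}
      = ((q:ENNReal)^N)⁻¹ := by
  rw [cyl_eq hq d, Real.volume_Ico]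
  have hqN : (0:ℝ) < (q:ℝ)^N := by positivity
  have h1 : ((encodeD d : ℝ)+1)/(q:ℝ)^N - (encodeD d : ℝ)/(q:ℝ)^N = ((q:ℝ)^N)⁻¹ := by
    field_simp
    ring
  rw [h1, ENNReal.ofReal_inv_of_pos hqN]
  congr 1
  rw [ENNReal.ofReal_pow (by positivity), ENNReal.ofReal_natCast]

lemma volume_digit_set {q : ℕ} [NeZero q] (hq : 2 ≤ q) (s N : ℕ)
    (P : (Fin s → Fin N → ZMod q) → Prop) [DecidablePred P] :
    volume {f : Fin s → ℝ | (∀ i, f i ∈ Set.Ico (0:ℝ) 1) ∧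
        P (fun i n => qDigit q (f i) (n:ℕ))} =
      ((Finset.univ.filter P).card : ENNReal) * (((q:ENNReal)^N)⁻¹)^s := by
  classical
  set cylSet : (Fin N → ZMod q) → Set ℝ :=
    fun e => {x : ℝ | x ∈ Set.Ico (0:ℝ) 1 ∧ ∀ n : Fin N, qDigit q x (n:ℕ) = e n} with hcyl
  set Cyl : (Fin s → Fin N → ZMod q) → Set (Fin s → ℝ) :=
    fun d => Set.pi Set.univ (fun i => cylSet (d i)) with hCyl
  have hset : {f : Fin s → ℝ | (∀ i, f i ∈ Set.Ico (0:ℝ) 1) ∧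
        P (fun i n => qDigit q (f i) (n:ℕ))}
      = ⋃ d ∈ Finset.univ.filter P, Cyl d := by
    ext f
    simp only [Set.mem_setOf_eq, Set.mem_iUnion, Finset.mem_filter, Finset.mem_univ,
      true_and, exists_prop, hCyl, Set.mem_pi, Set.mem_univ, forall_true_left, hcyl]
    constructor
    · rintro ⟨hIco, hP⟩
      refine ⟨fun i (n : Fin N) => qDigit q (f i) (n:ℕ), hP, fun i => ⟨hIco i, fun n => rfl⟩⟩
    · rintro ⟨d, hd, hf⟩
      have hDf : (fun i (n : Fin N) => qDigit q (f i) (n:ℕ)) = d := by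
        funext i n
        exact (hf i).2 n
      exact ⟨fun i => (hf i).1, by rw [hDf]; exact hd⟩
  rw [hset, measure_biUnion_finset]
  · have hv : ∀ d ∈ Finset.univ.filter P, volume (Cyl d) = (((q:ENNReal)^N)⁻¹)^s := by
      intro d _
      rw [hCyl]
      simp only []
      rw [volume_pi_pi]
      rw [Finset.prod_congr rfl (fun i _ => volume_cylSet hq (d i))]
      simp
    rw [Finset.sum_congr rfl hv, Finset.sum_const, nsmul_eq_mul]
  · -- pairwise disjoint
    intro d hd d' hd' hne
    simp only [Function.onFun]
    rw [Set.disjoint_left]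
    intro f hf hf'
    apply hne
    funext i n
    have h1 := (hf i (Set.mem_univ i)).2 n
    have h2 := (hf' i (Set.mem_univ i)).2 n
    rw [← h1, ← h2]
  · intro d _
    rw [hCyl]
    simp only []
    apply MeasurableSet.univ_pi
    intro i
    show MeasurableSet {x : ℝ | x ∈ Set.Ico (0:ℝ) 1 ∧ ∀ n : Fin N, qDigit q x (n:ℕ) = d i n}
    rw [cyl_eq hq]
    exact measurableSet_Ico

lemma poly_algebra {q : ℕ} (hq : q.Prime) {s m : ℕ} (hm : 2 ≤ m)
    (k β : Fin s → Polynomial (ZMod q))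
    (hk0 : ∀ i, k i ≠ 0) (hdeg : ∑ i, (k i).natDegree = m)
    (hkgcd : GcdOne k) (hβ0 : ¬ ∀ i, β i = 0)
    (hβ : ∀ i, β i = 0 ∨ IsCoprime (β i) (k i))
    (A B : Polynomial (ZMod q))
    (h : ∀ i, A * k i + B * (k i + β i) = 0) : A = 0 ∧ B = 0 := by
  haveI : Fact q.Prime := ⟨hq⟩
  by_cases hB : B = 0
  · subst hB
    refine ⟨?_, rfl⟩
    by_cases hss : s = 0
    · subst hss; simp at hdeg; omega
    · have i0 : Fin s := ⟨0, Nat.pos_of_ne_zero hss⟩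
      have := h i0
      simp only [zero_mul, add_zero] at this
      rcases mul_eq_zero.mp this with hA | hk
      · exact hA
      · exact absurd hk (hk0 i0)
  · exfalso
    have h' : ∀ i, (A + B) * k i = -(B * β i) := by
      intro i
      linear_combination (h i)
    by_cases hAB : A + B = 0
    · apply hβ0
      intro i
      have := h' i
      rw [hAB, zero_mul] at this
      have : B * β i = 0 := by linear_combination this
      rcases mul_eq_zero.mp this with h1 | h2
      · exact absurd h1 hB
      · exact h2
    · -- A + B ≠ 0
      have hβne : ∀ i, β i ≠ 0 := by
        intro i hβi
        have := h' i
        rw [hβi, mul_zero, neg_zero] at this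
        rcases mul_eq_zero.mp this with h1 | h2
        · exact hAB h1
        · exact hk0 i h2
      have hcop : ∀ i, IsCoprime (β i) (k i) := fun i => (hβ i).resolve_left (hβne i)
      set G := GCDMonoid.gcd B (A + B) with hG
      have hGne : G ≠ 0 := fun h0 => hB ((gcd_eq_zero_iff _ _).mp h0).1
      set B' := B / G with hB'
      set C' := (A + B) / G with hC'
      have hBeq : G * B' = B := EuclideanDomain.mul_div_cancel' hGne (gcd_dvd_left _ _)
      have hCeq : G * C' = A + B := EuclideanDomain.mul_div_cancel' hGne (gcd_dvd_right _ _)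
      have hcop' : IsCoprime B' C' := isCoprime_div_gcd_div_gcd hAB
      have key : ∀ i, B' * β i = -(C' * k i) := by
        intro i
        apply mul_left_cancel₀ hGne
        have := h' i
        calc G * (B' * β i) = (G * B') * β i := by ring
        _ = B * β i := by rw [hBeq]
        _ = -((A + B) * k i) := by rw [h' i]; ring
        _ = -((G * C') * k i) := by rw [hCeq]
        _ = G * (-(C' * k i)) := by ring
      have hB'dvd : ∀ i, B' ∣ k i := by
        intro i
        apply hcop'.dvd_of_dvd_mul_left
        exact ⟨-(β i), by linear_combination key i⟩
      have hB'unit : IsUnit B' := hkgcd B' hB'dvd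
      obtain ⟨v, hv⟩ : ∃ v, v * B' = 1 := by
        obtain ⟨u, hu⟩ := hB'unit
        exact ⟨(u⁻¹ : (Polynomial (ZMod q))ˣ), by rw [← hu]; simp⟩
      have hkdvd : ∀ i, k i ∣ β i := by
        intro i
        refine ⟨v * (-C'), ?_⟩
        calc β i = v * (B' * β i) := by rw [← mul_assoc, hv, one_mul]
        _ = v * (-(C' * k i)) := by rw [key i]
        _ = k i * (v * -C') := by ring
      have hkunit : ∀ i, IsUnit (k i) := fun i =>
        (hcop i).isUnit_of_dvd' (hkdvd i) dvd_rfl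
      have hdeg0 : ∀ i, (k i).natDegree = 0 := fun i =>
        Polynomial.natDegree_eq_zero_of_isUnit (hkunit i)
      rw [Finset.sum_congr rfl (fun i _ => hdeg0 i), Finset.sum_const] at hdeg
      simp at hdeg
      omega

variable {q : ℕ}

/-- extension of a finite digit vector by zero -/
def extN {N : ℕ} (v : Fin N → ZMod q) : ℕ → ZMod q :=
  fun t => if h : t < N then v ⟨t, h⟩ else 0

lemma extN_add {N : ℕ} (a b : Fin N → ZMod q) : extN (a + b) = extN a + extN b := by
  funext t; simp only [Pi.add_apply, extN]; split <;> simp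

lemma extN_smul {N : ℕ} (c : ZMod q) (a : Fin N → ZMod q) :
    extN (c • a) = c • extN a := by
  funext t; simp only [Pi.smul_apply, extN, smul_eq_mul]; split <;> simp

lemma fracCoeff_add (p : Polynomial (ZMod q)) (f g : ℕ → ZMod q) (n : ℕ) :
    fracCoeff q p (f + g) n = fracCoeff q p f n + fracCoeff q p g n := by
  simp [fracCoeff, mul_add, Finset.sum_add_distrib]

lemma fracCoeff_smul (p : Polynomial (ZMod q)) (c : ZMod q) (f : ℕ → ZMod q) (n : ℕ) :
    fracCoeff q p (c • f) n = c * fracCoeff q p f n := by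
  simp only [fracCoeff, Finset.mul_sum, Pi.smul_apply, smul_eq_mul]
  exact Finset.sum_congr rfl fun j _ => by ring

lemma fracCoeff_zero {N : ℕ} (p : Polynomial (ZMod q)) (n : ℕ) :
    fracCoeff q p (extN (0 : Fin N → ZMod q)) n = 0 := by
  have : extN (0 : Fin N → ZMod q) = fun _ => 0 := by
    funext t; simp [extN]
  simp [fracCoeff, this]

/-- the joint linear map of the two events -/
noncomputable def Phi (s N m1 M1 : ℕ) (k kt : Fin s → Polynomial (ZMod q)) :
    (Fin s → Fin N → ZMod q) →ₗ[ZMod q]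
      ((Fin m1 → ZMod q) × (Fin M1 → ZMod q)) where
  toFun v := (fun n => ∑ i, fracCoeff q (k i) (extN (v i)) (n:ℕ),
              fun n => ∑ i, fracCoeff q (kt i) (extN (v i)) (n:ℕ))
  map_add' v w := by
    ext n <;>
    · simp only [Pi.add_apply, Prod.fst_add, Prod.snd_add]
      rw [← Finset.sum_add_distrib]
      exact Finset.sum_congr rfl fun i _ => by
        rw [extN_add, fracCoeff_add]
  map_smul' c v := by
    ext n <;>
    · simp only [Pi.smul_apply, RingHom.id_apply, Prod.smul_fst, Prod.smul_snd, smul_eq_mul,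
        Finset.mul_sum]
      exact Finset.sum_congr rfl fun i _ => by
        rw [extN_smul, fracCoeff_smul]


lemma Phi_apply {s N m1 M1 : ℕ} (k kt : Fin s → Polynomial (ZMod q)) (v) :
    Phi s N m1 M1 k kt v
      = (fun n : Fin m1 => ∑ i, fracCoeff q (k i) (extN (v i)) (n:ℕ),
         fun n : Fin M1 => ∑ i, fracCoeff q (kt i) (extN (v i)) (n:ℕ)) := rfl

lemma fracCoeff_delta (p : Polynomial (ZMod q)) {N t : ℕ} (ht : t < N) (n : ℕ) :
    fracCoeff q p (extN (fun n' : Fin N => if (n':ℕ) = t then 1 else 0)) n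
      = if n ≤ t then p.coeff (t - n) else 0 := by
  have hext : ∀ t', extN (fun n' : Fin N => if (n':ℕ) = t then (1 : ZMod q) else 0) t'
      = if t' = t then 1 else 0 := by
    intro t'
    by_cases h : t' < N
    · simp only [extN, dif_pos h]
    · simp only [extN, dif_neg h]
      rw [if_neg (by omega)]
  simp only [fracCoeff, hext]
  by_cases hn : n ≤ t
  · rw [if_pos hn]
    by_cases hd : t - n ≤ p.natDegree
    · rw [Finset.sum_eq_single (t - n)]
      · rw [if_pos (by omega), mul_one]
      · intro j _ hj
        rw [if_neg (by omega), mul_zero]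
      · intro hmem
        exact absurd (Finset.mem_range.mpr (by omega)) hmem
    · rw [Polynomial.coeff_eq_zero_of_natDegree_lt (by omega)]
      apply Finset.sum_eq_zero
      intro j hj
      rw [Finset.mem_range] at hj
      rw [if_neg (by omega), mul_zero]
  · rw [if_neg hn]
    apply Finset.sum_eq_zero
    intro j _
    rw [if_neg (by omega), mul_zero]

lemma coeffA {m1 : ℕ} (a : Fin m1 → ZMod q) (t : ℕ) :
    (∑ n : Fin m1, Polynomial.C (a n) * Polynomial.X ^ (n:ℕ)).coeff t
      = if h : t < m1 then a ⟨t, h⟩ else 0 := by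
  rw [Polynomial.finset_sum_coeff]
  simp only [Polynomial.coeff_C_mul, Polynomial.coeff_X_pow]
  split
  · next h =>
    rw [Finset.sum_eq_single (⟨t, h⟩ : Fin m1)]
    · simp
    · intro b _ hb
      rw [if_neg, mul_zero]
      intro htb
      exact hb (by apply Fin.ext; simp [htb])
    · simp
  · next h =>
    apply Finset.sum_eq_zero
    intro n _
    rw [if_neg (by omega), mul_zero]

variable [Fact (1 < q)]

lemma degA {m1 : ℕ} (a : Fin m1 → ZMod q) :
    (∑ n : Fin m1, Polynomial.C (a n) * Polynomial.X ^ (n:ℕ)).natDegree ≤ m1 := by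
  apply Polynomial.natDegree_sum_le_of_forall_le
  intro n _
  apply le_trans (Polynomial.natDegree_C_mul_le _ _)
  rw [Polynomial.natDegree_X_pow]
  omega

lemma sum_eval (p : Polynomial (ZMod q)) {m1 : ℕ} (a : Fin m1 → ZMod q) (t : ℕ) :
    ∑ n : Fin m1, (if (n:ℕ) ≤ t then p.coeff (t - (n:ℕ)) else 0) * a n
      = ((∑ n : Fin m1, Polynomial.C (a n) * Polynomial.X ^ (n:ℕ)) * p).coeff t := by
  set A := ∑ n : Fin m1, Polynomial.C (a n) * Polynomial.X ^ (n:ℕ) with hA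
  set F : ℕ → ZMod q := fun n => (if n ≤ t then p.coeff (t - n) else 0) * A.coeff n with hF
  have h1 : ∑ n : Fin m1, (if (n:ℕ) ≤ t then p.coeff (t - (n:ℕ)) else 0) * a n
      = ∑ n ∈ Finset.range m1, F n := by
    rw [← Fin.sum_univ_eq_sum_range F m1]
    apply Finset.sum_congr rfl
    intro n _
    rw [hF]
    simp only []
    rw [coeffA, dif_pos n.isLt]
  have h2 : ∑ n ∈ Finset.range m1, F n = ∑ n ∈ Finset.range (m1 + t + 1), F n := by
    apply Finset.sum_subset (Finset.range_subset_range.mpr (by omega))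
    intro n _ hn
    rw [Finset.mem_range] at hn
    rw [hF]
    simp only []
    rw [coeffA, dif_neg (by omega), mul_zero]
  have h4 : ∑ n ∈ Finset.range (t+1), F n = ∑ n ∈ Finset.range (m1 + t + 1), F n := by
    apply Finset.sum_subset (Finset.range_subset_range.mpr (by omega))
    intro n _ hn
    rw [Finset.mem_range] at hn
    rw [hF]
    simp only []
    rw [if_neg (by omega), zero_mul]
  have h3 : ∑ n ∈ Finset.range (t+1), F n
      = ∑ n ∈ Finset.range (t+1), A.coeff n * p.coeff (t - n) := by
    apply Finset.sum_congr rfl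
    intro n hn
    rw [Finset.mem_range] at hn
    rw [hF]
    simp only []
    rw [if_pos (by omega), mul_comm]
  rw [h1, h2, ← h4, h3, Polynomial.coeff_mul, Finset.Nat.sum_antidiagonal_eq_sum_range_succ_mk]

set_option linter.unusedSectionVars false

lemma phi_apply_delta {s N m1 M1 : ℕ} (k kt : Fin s → Polynomial (ZMod q))
    (i : Fin s) {t : ℕ} (ht : t < N) :
    Phi s N m1 M1 k kt (fun i' => if i' = i then
        (fun n : Fin N => if (n:ℕ) = t then 1 else 0) else 0)
      = (fun n : Fin m1 => if (n:ℕ) ≤ t then (k i).coeff (t - (n:ℕ)) else 0,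
         fun n : Fin M1 => if (n:ℕ) ≤ t then (kt i).coeff (t - (n:ℕ)) else 0) := by
  have hcomp : ∀ (p : Fin s → Polynomial (ZMod q)) (n : ℕ),
      ∑ i', fracCoeff q (p i') (extN ((fun i' => if i' = i then
        (fun n : Fin N => if (n:ℕ) = t then (1 : ZMod q) else 0) else 0) i')) n
      = if n ≤ t then (p i).coeff (t - n) else 0 := by
    intro p n
    rw [Finset.sum_eq_single i]
    · have h0 : (fun i' => if i' = i then (fun n : Fin N => if (n:ℕ) = t then (1 : ZMod q) else 0)
          else 0) i = (fun n : Fin N => if (n:ℕ) = t then (1 : ZMod q) else 0) := by simp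
      rw [h0, fracCoeff_delta _ ht]
    · intro i' _ hi'
      have h0 : (fun i' => if i' = i then (fun n : Fin N => if (n:ℕ) = t then (1 : ZMod q) else 0)
          else 0) i' = 0 := by simp [hi']
      rw [h0, fracCoeff_zero]
    · intro h
      exact absurd (Finset.mem_univ i) h
  rw [Phi]
  simp only [LinearMap.coe_mk, AddHom.coe_mk]
  ext n
  · exact hcomp k (n:ℕ)
  · exact hcomp kt (n:ℕ)

lemma Phi_surjective (hq : q.Prime) {s m : ℕ} (hm : 2 ≤ m)
    (k β : Fin s → Polynomial (ZMod q))
    (hk0 : ∀ i, k i ≠ 0) (hdeg : ∑ i, (k i).natDegree = m)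
    (hkgcd : GcdOne k) (hβ0 : ¬ ∀ i, β i = 0)
    (hβ : ∀ i, β i = 0 ∨ IsCoprime (β i) (k i))
    {N m1 M1 : ℕ}
    (hN1 : ∀ i, m1 + (k i).natDegree < N)
    (hN2 : ∀ i, M1 + (k i + β i).natDegree < N) :
    Function.Surjective (Phi s N m1 M1 k (fun i => k i + β i)) := by
  haveI : Fact q.Prime := ⟨hq⟩
  rw [← LinearMap.range_eq_top]
  by_contra hlt
  obtain ⟨φ, hφ0, hφbot⟩ := Submodule.exists_dual_map_eq_bot_of_lt_top
    (lt_top_iff_ne_top.mpr hlt) inferInstance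
  set Φ := Phi s N m1 M1 k (fun i => k i + β i) with hΦ
  have hφ : ∀ v, φ (Φ v) = 0 := by
    intro v
    have : φ (Φ v) ∈ Submodule.map φ (LinearMap.range Φ) :=
      Submodule.mem_map_of_mem (LinearMap.mem_range_self _ v)
    rw [hφbot] at this
    exact this
  set a : Fin m1 → ZMod q := fun n => φ (fun j => if n = j then 1 else 0, 0) with ha
  set b : Fin M1 → ZMod q := fun n => φ (0, fun j => if n = j then 1 else 0) with hb
  have hdecomp : ∀ w : (Fin m1 → ZMod q) × (Fin M1 → ZMod q),
      φ w = ∑ n, w.1 n * a n + ∑ n, w.2 n * b n := by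
    intro w
    have hsplit : φ w = φ (w.1, 0) + φ (0, w.2) := by
      rw [← map_add]
      congr
      ext <;> simp
    rw [hsplit]
    congr 1
    · have := LinearMap.pi_apply_eq_sum_univ
        (φ.comp (LinearMap.inl (ZMod q) (Fin m1 → ZMod q) (Fin M1 → ZMod q))) w.1
      simp only [LinearMap.comp_apply, LinearMap.coe_inl] at this
      rw [this]
      exact Finset.sum_congr rfl fun n _ => by rw [smul_eq_mul, ha]
    · have := LinearMap.pi_apply_eq_sum_univ
        (φ.comp (LinearMap.inr (ZMod q) (Fin m1 → ZMod q) (Fin M1 → ZMod q))) w.2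
      simp only [LinearMap.comp_apply, LinearMap.coe_inr] at this
      rw [this]
      exact Finset.sum_congr rfl fun n _ => by rw [smul_eq_mul, hb]
  set A := ∑ n : Fin m1, Polynomial.C (a n) * Polynomial.X ^ (n:ℕ) with hA
  set B := ∑ n : Fin M1, Polynomial.C (b n) * Polynomial.X ^ (n:ℕ) with hB
  have hcoeff : ∀ i, ∀ t, t < N → (A * k i + B * (k i + β i)).coeff t = 0 := by
    intro i t ht
    have h1 := hφ (fun i' => if i' = i then
        (fun n : Fin N => if (n:ℕ) = t then 1 else 0) else 0)
    rw [hΦ, phi_apply_delta k (fun i => k i + β i) i ht, hdecomp] at h1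
    simp only [] at h1
    rw [Polynomial.coeff_add, hA, hB,
      ← sum_eval (k i) a t, ← sum_eval (k i + β i) b t]
    exact h1
  have hzero : ∀ i, A * k i + B * (k i + β i) = 0 := by
    intro i
    ext t
    rw [Polynomial.coeff_zero]
    rcases Nat.lt_or_ge t N with h | h
    · exact hcoeff i t h
    · apply Polynomial.coeff_eq_zero_of_natDegree_lt
      apply lt_of_le_of_lt (Polynomial.natDegree_add_le _ _)
      apply max_lt
      · apply lt_of_le_of_lt (Polynomial.natDegree_mul_le)
        have hdA : A.natDegree ≤ m1 := by rw [hA]; exact degA a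
        have := hN1 i
        omega
      · apply lt_of_le_of_lt (Polynomial.natDegree_mul_le)
        have hdB : B.natDegree ≤ M1 := by rw [hB]; exact degA b
        have := hN2 i
        omega
  obtain ⟨hA0, hB0⟩ := poly_algebra hq hm k β hk0 hdeg hkgcd hβ0 hβ A B hzero
  have ha0 : ∀ n, a n = 0 := by
    intro n
    have := coeffA a (n:ℕ)
    rw [← hA, hA0, Polynomial.coeff_zero, dif_pos n.isLt] at this
    simpa using this.symm
  have hb0 : ∀ n, b n = 0 := by
    intro n
    have := coeffA b (n:ℕ)
    rw [← hB, hB0, Polynomial.coeff_zero, dif_pos n.isLt] at this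
    simpa using this.symm
  apply hφ0
  apply LinearMap.ext
  intro w
  rw [hdecomp]
  simp [ha0, hb0]


set_option maxHeartbeats 1000000 in
/-- Independence of the two events in Lemma 3: for a tuple `(k_1,…,k_s)` of nonzero
polynomials with gcd `1`, `(k_1,…,k_s) ≠ (1,…,1)`, degrees summing to `m ≥ 2`, and
perturbations `β_j` (not all zero, each zero or coprime to `k_j`), the set of
`(f_1,…,f_s) ∈ Z̄^s` with `ν({∑ k_j f_j}) ≤ -m` and `ν({∑ (k_j+β_j) f_j}) ≤ -⌊m/2⌋`
has Haar measure `q^{-(m-1)} · q^{-(⌊m/2⌋-1)}`. -/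
theorem measure_intersection_indep (q : ℕ) (hq : q.Prime) (s : ℕ) (hs : 1 ≤ s)
    (m : ℕ) (hm : 2 ≤ m)
    (k β : Fin s → Polynomial (ZMod q))
    (hk0 : ∀ i, k i ≠ 0) (hdeg : ∑ i, (k i).natDegree = m)
    (hkgcd : GcdOne k) (hk1 : ¬ ∀ i, k i = 1)
    (hβ0 : ¬ ∀ i, β i = 0)
    (hβ : ∀ i, β i = 0 ∨ IsCoprime (β i) (k i)) :
    volume {f : Fin s → ℝ | (∀ i, f i ∈ Set.Ico (0:ℝ) 1) ∧
        (∀ n : ℕ, n + 2 ≤ m → ∑ i, fracCoeff q (k i) (qDigit q (f i)) n = 0) ∧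
        (∀ n : ℕ, n + 2 ≤ m / 2 →
          ∑ i, fracCoeff q (k i + β i) (qDigit q (f i)) n = 0)} =
      ((q : ENNReal) ^ (m - 1))⁻¹ * ((q : ENNReal) ^ (m / 2 - 1))⁻¹ := by
  classical
  haveI hPrime : Fact q.Prime := ⟨hq⟩
  haveI : NeZero q := ⟨hq.ne_zero⟩
  haveI : Fact (1 < q) := ⟨hq.one_lt⟩
  have hq2 : 2 ≤ q := hq.two_le
  set M := m / 2 with hM
  set m1 := m - 1 with hm1
  set M1 := M - 1 with hM1
  set N := 2 * m + ∑ i, (k i + β i).natDegree with hN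
  have hdegk : ∀ i, (k i).natDegree ≤ m := by
    intro i
    rw [← hdeg]
    exact Finset.single_le_sum (f := fun i => (k i).natDegree) (fun _ _ => Nat.zero_le _)
      (Finset.mem_univ i)
  have hdegkt : ∀ i, (k i + β i).natDegree ≤ ∑ i, (k i + β i).natDegree := by
    intro i
    exact Finset.single_le_sum (f := fun i => (k i + β i).natDegree) (fun _ _ => Nat.zero_le _)
      (Finset.mem_univ i)
  -- the digit predicate
  set P : (Fin s → Fin N → ZMod q) → Prop := fun v =>
    (∀ n : ℕ, n + 2 ≤ m → ∑ i, fracCoeff q (k i) (extN (v i)) n = 0) ∧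
    (∀ n : ℕ, n + 2 ≤ M → ∑ i, fracCoeff q (k i + β i) (extN (v i)) n = 0) with hP
  -- rewrite the set
  have hsetEq : {f : Fin s → ℝ | (∀ i, f i ∈ Set.Ico (0:ℝ) 1) ∧
        (∀ n : ℕ, n + 2 ≤ m → ∑ i, fracCoeff q (k i) (qDigit q (f i)) n = 0) ∧
        (∀ n : ℕ, n + 2 ≤ M →
          ∑ i, fracCoeff q (k i + β i) (qDigit q (f i)) n = 0)}
      = {f : Fin s → ℝ | (∀ i, f i ∈ Set.Ico (0:ℝ) 1) ∧
          P (fun i n => qDigit q (f i) (n:ℕ))} := by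
    have hagree : ∀ (p : Polynomial (ZMod q)) (x : ℝ) (n : ℕ), n + p.natDegree < N →
        fracCoeff q p (extN (fun n' : Fin N => qDigit q x (n':ℕ))) n
          = fracCoeff q p (qDigit q x) n := by
      intro p x n hn
      unfold fracCoeff
      apply Finset.sum_congr rfl
      intro j hj
      rw [Finset.mem_range] at hj
      congr 1
      unfold extN
      rw [dif_pos (by omega)]
    ext f
    simp only [Set.mem_setOf_eq, hP]
    constructor
    · rintro ⟨hIco, h1, h2⟩
      refine ⟨hIco, fun n hn => ?_, fun n hn => ?_⟩
      · rw [Finset.sum_congr rfl fun i _ => hagree (k i) (f i) n (by have := hdegk i; omega)]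
        exact h1 n hn
      · rw [Finset.sum_congr rfl fun i _ => hagree (k i + β i) (f i) n
          (by have := hdegkt i; have : M ≤ m := Nat.div_le_self m 2; omega)]
        exact h2 n hn
    · rintro ⟨hIco, h1, h2⟩
      refine ⟨hIco, fun n hn => ?_, fun n hn => ?_⟩
      · rw [← Finset.sum_congr rfl fun i _ => hagree (k i) (f i) n (by have := hdegk i; omega)]
        exact h1 n hn
      · rw [← Finset.sum_congr rfl fun i _ => hagree (k i + β i) (f i) n
          (by have := hdegkt i; have : M ≤ m := Nat.div_le_self m 2; omega)]
        exact h2 n hn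
  rw [hsetEq, volume_digit_set hq2 s N P]
  -- identify P with the kernel of Phi
  set Φ := Phi (q := q) s N m1 M1 k (fun i => k i + β i) with hΦ
  have hPker : ∀ v, P v ↔ v ∈ LinearMap.ker Φ := by
    intro v
    rw [LinearMap.mem_ker, hΦ, Phi_apply, hP]
    rw [Prod.mk_eq_zero]
    simp only [funext_iff, Pi.zero_apply]
    constructor
    · rintro ⟨h1, h2⟩
      constructor
      · intro n; exact h1 (n:ℕ) (by have := n.isLt; omega)
      · intro n
        have hM1lt := n.isLt
        exact h2 (n:ℕ) (by omega)
    · rintro ⟨h1, h2⟩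
      constructor
      · intro n hn; exact h1 ⟨n, by omega⟩
      · intro n hn
        have hMpos : 1 ≤ M := by omega
        exact h2 ⟨n, by omega⟩
  -- surjectivity
  have hsurj : Function.Surjective Φ := by
    rw [hΦ]
    apply Phi_surjective hq hm k β hk0 hdeg hkgcd hβ0 hβ
    · intro i
      have := hdegk i
      omega
    · intro i
      have := hdegkt i
      have hMm : M ≤ m := Nat.div_le_self m 2
      omega
  -- count
  have hcard : (Finset.univ.filter P).card = q ^ (Module.finrank (ZMod q) (LinearMap.ker Φ)) := by
    rw [← Fintype.card_subtype]
    rw [Fintype.card_congr (Equiv.subtypeEquivRight hPker)]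
    exact Module.card_eq_pow_finrank (K := ZMod q) (V := LinearMap.ker Φ) |>.trans (by rw [ZMod.card])
  -- rank-nullity
  have hrank : Module.finrank (ZMod q) (LinearMap.ker Φ) + (m1 + M1) = s * N := by
    have h1 := LinearMap.finrank_range_add_finrank_ker Φ
    rw [LinearMap.range_eq_top.mpr hsurj, finrank_top] at h1
    have h2 : Module.finrank (ZMod q) ((Fin m1 → ZMod q) × (Fin M1 → ZMod q)) = m1 + M1 := by
      rw [Module.finrank_prod, Module.finrank_pi, Module.finrank_pi, Fintype.card_fin,
        Fintype.card_fin]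
    have h3 : Module.finrank (ZMod q) (Fin s → Fin N → ZMod q) = s * N := by
      rw [Module.finrank_pi_fintype]
      simp [Module.finrank_pi]
    omega
  rw [hcard]
  -- final ENNReal computation
  set e := Module.finrank (ZMod q) (LinearMap.ker Φ) with he
  have hQ0 : (q : ENNReal) ≠ 0 := by
    simp only [ne_eq, Nat.cast_eq_zero]
    omega
  have hQt : (q : ENNReal) ≠ ⊤ := ENNReal.natCast_ne_top q
  have hkey : (q:ENNReal)^(s*N) = (q:ENNReal)^e * ((q:ENNReal)^m1 * (q:ENNReal)^M1) := by
    rw [← pow_add, ← pow_add]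
    congr 1
    omega
  calc ((q ^ e : ℕ) : ENNReal) * (((q:ENNReal)^N)⁻¹)^s
      = (q:ENNReal)^e * ((q:ENNReal)^(s*N))⁻¹ := by
        rw [Nat.cast_pow, ← ENNReal.inv_pow, ← pow_mul, mul_comm N s]
    _ = (q:ENNReal)^e * (((q:ENNReal)^e)⁻¹ * (((q:ENNReal)^m1)⁻¹ * ((q:ENNReal)^M1)⁻¹)) := by
        rw [hkey, ENNReal.mul_inv (Or.inl (pow_ne_zero _ hQ0)) (Or.inl (ENNReal.pow_ne_top hQt)),
          ENNReal.mul_inv (Or.inl (pow_ne_zero _ hQ0)) (Or.inl (ENNReal.pow_ne_top hQt))]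
    _ = ((q:ENNReal)^e * ((q:ENNReal)^e)⁻¹) * (((q:ENNReal)^m1)⁻¹ * ((q:ENNReal)^M1)⁻¹) := by
        ring
    _ = ((q:ENNReal)^m1)⁻¹ * ((q:ENNReal)^M1)⁻¹ := by
        rw [ENNReal.mul_inv_cancel (pow_ne_zero _ hQ0) (ENNReal.pow_ne_top hQt), one_mul]
end

section
/- Let q be prime, s ≥ 2, and p ∈ F_q[x] a nonzero polynomial divisible by x. Then for every x₀ ∈ ℕ, the sum ∑_{ℓ monic, deg(ℓ) ≤ x₀, gcd(ℓ,p)=1} μ_q(ℓ)/q^{s·deg(ℓ)} ≥ 1 − (q−1)/q^s − 1/(q^{s−1}(q^{s−1}−1)) > 0, where μ_q is the polynomial Möbius function. -/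
open Polynomial UniqueFactorizationMonoid
open scoped Classical

noncomputable def polyMoebius (q : ℕ) [Fact q.Prime] (f : Polynomial (ZMod q)) : ℤ :=
  if Squarefree f then (-1) ^ (Multiset.card (normalizedFactors f)) else 0

lemma polyMoebius_bounds (q : ℕ) [Fact q.Prime] (f : Polynomial (ZMod q)) :
    -1 ≤ polyMoebius q f ∧ polyMoebius q f ≤ 1 := by
  unfold polyMoebius
  split
  · rcases neg_one_pow_eq_or ℤ (Multiset.card (normalizedFactors f)) with h | h <;> rw [h] <;> omega
  · omega

lemma set_finite (q : ℕ) [Fact q.Prime] (p : Polynomial (ZMod q)) (x₀ : ℕ) :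
    {ℓ : Polynomial (ZMod q) | ℓ.Monic ∧ ℓ.natDegree ≤ x₀ ∧ IsCoprime ℓ p}.Finite := by
  apply Set.Finite.of_finite_image (f := fun ℓ => (fun i : Fin (x₀ + 1) => ℓ.coeff i))
    (Set.toFinite _)
  intro a ha b hb hab
  ext i
  rcases le_or_gt i x₀ with h | h
  · exact congrFun hab ⟨i, by omega⟩
  · rw [coeff_eq_zero_of_natDegree_lt (lt_of_le_of_lt ha.2.1 h),
      coeff_eq_zero_of_natDegree_lt (lt_of_le_of_lt hb.2.1 h)]

lemma card_monic_deg (q : ℕ) [Fact q.Prime] (F : Finset (Polynomial (ZMod q))) (d : ℕ)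
    (hF : ∀ ℓ ∈ F, ℓ.Monic ∧ ℓ.natDegree = d) : F.card ≤ q ^ d := by
  have : F.card ≤ (Finset.univ : Finset (Fin d → ZMod q)).card := by
    apply Finset.card_le_card_of_injOn (fun ℓ => fun i : Fin d => ℓ.coeff i)
      (fun _ _ => Finset.mem_univ _)
    intro a ha b hb hab
    obtain ⟨ham, had⟩ := hF a ha
    obtain ⟨hbm, hbd⟩ := hF b hb
    ext i
    rcases lt_trichotomy i d with h | h | h
    · exact congrFun hab ⟨i, h⟩
    · subst h
      rw [← had, ham.coeff_natDegree, had, ← hbd, hbm.coeff_natDegree]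
    · rw [coeff_eq_zero_of_natDegree_lt (had ▸ h), coeff_eq_zero_of_natDegree_lt (hbd ▸ h)]
  simpa [ZMod.card] using this

lemma card_monic_deg_one (q : ℕ) [Fact q.Prime] (p : Polynomial (ZMod q))
    (hX : Polynomial.X ∣ p) (F : Finset (Polynomial (ZMod q)))
    (hF : ∀ ℓ ∈ F, ℓ.Monic ∧ ℓ.natDegree = 1 ∧ IsCoprime ℓ p) : F.card ≤ q - 1 := by
  have : F.card ≤ ((Finset.univ : Finset (ZMod q)).erase 0).card := by
    apply Finset.card_le_card_of_injOn (fun ℓ => ℓ.coeff 0)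
    · intro ℓ hℓ
      obtain ⟨hm, hd, hc⟩ := hF ℓ hℓ
      refine Finset.mem_erase.2 ⟨?_, Finset.mem_univ _⟩
      intro h0
      have hdvd : Polynomial.X ∣ ℓ := X_dvd_iff.2 h0
      exact Polynomial.not_isUnit_X (hc.isUnit_of_dvd' hdvd hX)
    · intro a ha b hb hab
      obtain ⟨ham, had, _⟩ := hF a ha
      obtain ⟨hbm, hbd, _⟩ := hF b hb
      ext i
      match i with
      | 0 => exact hab
      | 1 => rw [← had, ham.coeff_natDegree, had, ← hbd, hbm.coeff_natDegree]
      | (n+2) =>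
        rw [coeff_eq_zero_of_natDegree_lt (by omega), coeff_eq_zero_of_natDegree_lt (by omega)]
  simpa [ZMod.card] using this

/-- For `s ≥ 2` and a nonzero `p ∈ F_q[x]` divisible by `x`, and any `x₀ ∈ ℕ`,
`∑_{ℓ monic, deg ℓ ≤ x₀, gcd(ℓ,p)=1} μ_q(ℓ)/q^{s·deg ℓ}
  ≥ 1 - (q-1)/q^s - 1/(q^{s-1}(q^{s-1}-1)) > 0`. -/
theorem moebius_truncated_sum_positive (q : ℕ) [Fact q.Prime] (s : ℕ) (hs : 2 ≤ s)
    (p : Polynomial (ZMod q)) (hp : p ≠ 0) (hX : Polynomial.X ∣ p) (x₀ : ℕ) :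
    ((1 : ℝ) - ((q : ℝ) - 1) / (q : ℝ) ^ s
        - 1 / ((q : ℝ) ^ (s - 1) * ((q : ℝ) ^ (s - 1) - 1)) ≤
      ∑ᶠ ℓ ∈ {ℓ : Polynomial (ZMod q) | ℓ.Monic ∧ ℓ.natDegree ≤ x₀ ∧ IsCoprime ℓ p},
        (polyMoebius q ℓ : ℝ) / (q : ℝ) ^ (s * ℓ.natDegree)) ∧
    (0 : ℝ) < (1 : ℝ) - ((q : ℝ) - 1) / (q : ℝ) ^ s
        - 1 / ((q : ℝ) ^ (s - 1) * ((q : ℝ) ^ (s - 1) - 1)) := by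
  have hqp : q.Prime := Fact.out
  have hq2 : (2 : ℝ) ≤ (q : ℝ) := by exact_mod_cast hqp.two_le
  have hq0 : (0 : ℝ) < (q : ℝ) := by linarith
  set Q : ℝ := (q : ℝ) ^ (s - 1) with hQdef
  have hQq : (q : ℝ) ≤ Q := le_self_pow₀ (by linarith) (by omega)
  have hQ2 : (2 : ℝ) ≤ Q := le_trans hq2 hQq
  have hQ0 : Q ≠ 0 := by linarith
  have hQ1 : Q - 1 ≠ 0 := by linarith
  have hQQpos : (0 : ℝ) < Q * (Q - 1) := by nlinarith
  -- positivity part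
  have hqs2 : (q : ℝ) ^ 2 ≤ (q : ℝ) ^ s := pow_le_pow_right₀ (by linarith) hs
  have hpos : (0 : ℝ) < (1 : ℝ) - ((q : ℝ) - 1) / (q : ℝ) ^ s
      - 1 / (Q * (Q - 1)) := by
    have hqs0 : (0 : ℝ) < (q : ℝ) ^ s := pow_pos hq0 s
    have h1 : ((q : ℝ) - 1) / (q : ℝ) ^ s < 1 / 2 := by
      rw [div_lt_div_iff₀ hqs0 (by norm_num)]
      nlinarith
    have h2 : 1 / (Q * (Q - 1)) ≤ 1 / 2 := by
      apply one_div_le_one_div_of_le (by norm_num)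
      nlinarith
    linarith
  refine ⟨?_, hpos⟩
  -- main inequality
  have hfin := set_finite q p x₀
  rw [← hfin.coe_toFinset, finsum_mem_coe_finset]
  set F := hfin.toFinset with hFdef
  have hmem : ∀ ℓ, ℓ ∈ F ↔ ℓ.Monic ∧ ℓ.natDegree ≤ x₀ ∧ IsCoprime ℓ p := fun ℓ =>
    hfin.mem_toFinset
  set f : Polynomial (ZMod q) → ℝ :=
    fun ℓ => (polyMoebius q ℓ : ℝ) / (q : ℝ) ^ (s * ℓ.natDegree) with hfdef
  have key : ∑ ℓ ∈ F, f ℓ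
      = ∑ d ∈ Finset.range (x₀ + 1), ∑ ℓ ∈ F.filter (fun ℓ => ℓ.natDegree = d), f ℓ :=
    (Finset.sum_fiberwise_of_maps_to
      (fun ℓ hℓ => Finset.mem_range.2 (Nat.lt_succ_of_le ((hmem ℓ).1 hℓ).2.1)) f).symm
  set T : ℕ → ℝ := fun d => ∑ ℓ ∈ F.filter (fun ℓ => ℓ.natDegree = d), f ℓ with hTdef
  -- d = 0 fiber
  have h0 : T 0 = 1 := by
    have hfe : F.filter (fun ℓ => ℓ.natDegree = 0) = {1} := by
      ext ℓ
      simp only [Finset.mem_filter, Finset.mem_singleton, hmem]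
      constructor
      · rintro ⟨⟨hm, _, _⟩, hd⟩
        exact hm.natDegree_eq_zero.1 hd
      · rintro rfl
        exact ⟨⟨monic_one, by simp, isCoprime_one_left⟩, natDegree_one⟩
    have hμ1 : polyMoebius q 1 = 1 := by
      simp [polyMoebius, squarefree_one]
    simp [hTdef, hfe, hfdef, hμ1]
  -- generic fiber bound
  have hbound : ∀ d : ℕ,
      -(((F.filter (fun ℓ => ℓ.natDegree = d)).card : ℝ) / (q : ℝ) ^ (s * d)) ≤ T d := by
    intro d
    have hqsd : (0 : ℝ) < (q : ℝ) ^ (s * d) := pow_pos hq0 _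
    have := Finset.card_nsmul_le_sum (F.filter (fun ℓ => ℓ.natDegree = d)) f
      (-(1 / (q : ℝ) ^ (s * d))) ?_
    · rw [nsmul_eq_mul] at this
      calc -(((F.filter (fun ℓ => ℓ.natDegree = d)).card : ℝ) / (q : ℝ) ^ (s * d))
          = ((F.filter (fun ℓ => ℓ.natDegree = d)).card : ℝ) * (-(1 / (q : ℝ) ^ (s * d))) := by
            ring
        _ ≤ T d := this
    · intro ℓ hℓ
      obtain ⟨hℓF, hℓd⟩ := Finset.mem_filter.1 hℓ
      have hμ := (polyMoebius_bounds q ℓ).1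
      have hμ' : (-1 : ℝ) ≤ (polyMoebius q ℓ : ℝ) := by exact_mod_cast hμ
      simp only [hfdef, hℓd]
      rw [show -(1 / (q : ℝ) ^ (s * d)) = (-1) / (q : ℝ) ^ (s * d) by ring]
      exact (div_le_div_iff_of_pos_right hqsd).2 hμ'
  -- degree-1 fiber bound
  have hq1n : 1 ≤ q := hqp.pos
  have hT1 : -(((q : ℝ) - 1) / (q : ℝ) ^ s) ≤ T 1 := by
    have hcard : ((F.filter (fun ℓ => ℓ.natDegree = 1)).card : ℝ) ≤ (q : ℝ) - 1 := by
      have hc := card_monic_deg_one q p hX (F.filter (fun ℓ => ℓ.natDegree = 1)) ?_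
      · have : (((q - 1 : ℕ)) : ℝ) = (q : ℝ) - 1 := by
          push_cast [Nat.cast_sub hq1n]; ring
        rw [← this]
        exact_mod_cast hc
      · intro ℓ hℓ
        obtain ⟨hℓF, hd⟩ := Finset.mem_filter.1 hℓ
        obtain ⟨hm, _, hc⟩ := (hmem ℓ).1 hℓF
        exact ⟨hm, hd, hc⟩
    have h1 := hbound 1
    rw [mul_one] at h1
    refine le_trans ?_ h1
    apply neg_le_neg
    gcongr
  -- generic fiber bound in terms of Q⁻¹
  have hr0 : (0 : ℝ) ≤ Q⁻¹ := by positivity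
  have hr1 : Q⁻¹ < 1 := inv_lt_one_of_one_lt₀ (by linarith)
  obtain ⟨t, rfl⟩ : ∃ t, s = t + 2 := ⟨s - 2, by omega⟩
  have hTd : ∀ d : ℕ, -(Q⁻¹ ^ d) ≤ T d := by
    intro d
    refine le_trans ?_ (hbound d)
    apply neg_le_neg
    have hcard : ((F.filter (fun ℓ => ℓ.natDegree = d)).card : ℝ) ≤ (q : ℝ) ^ d := by
      exact_mod_cast card_monic_deg q (F.filter (fun ℓ => ℓ.natDegree = d)) d
        (fun ℓ hℓ => by
          obtain ⟨hℓF, hd⟩ := Finset.mem_filter.1 hℓ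
          exact ⟨((hmem ℓ).1 hℓF).1, hd⟩)
    have heq : (q : ℝ) ^ d / (q : ℝ) ^ ((t + 2) * d) = Q⁻¹ ^ d := by
      have hex : (t + 2) * d = (t + 1) * d + d := by ring
      rw [hex, pow_add, mul_comm, div_mul_cancel_left₀ (pow_ne_zero _ hq0.ne'), hQdef]
      norm_num [← pow_mul]
    rw [← heq]
    gcongr
  -- tail bound
  have htail : -(1 / (Q * (Q - 1))) ≤ ∑ d ∈ Finset.Ico 2 (x₀ + 1), T d := by
    have h1 : ∑ d ∈ Finset.Ico 2 (x₀ + 1), -(Q⁻¹ ^ d)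
        ≤ ∑ d ∈ Finset.Ico 2 (x₀ + 1), T d :=
      Finset.sum_le_sum fun d _ => hTd d
    have h2 : ∑ d ∈ Finset.Ico 2 (x₀ + 1), Q⁻¹ ^ d ≤ Q⁻¹ ^ 2 / (1 - Q⁻¹) :=
      geom_sum_Ico_le_of_lt_one hr0 hr1
    have h3 : Q⁻¹ ^ 2 / (1 - Q⁻¹) = 1 / (Q * (Q - 1)) := by
      rw [div_eq_div_iff (by rw [sub_pos] at *; exact (by linarith : (0:ℝ) < 1 - Q⁻¹).ne') hQQpos.ne']
      field_simp
    rw [Finset.sum_neg_distrib] at h1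
    linarith
  have h0' : ∑ ℓ ∈ Finset.filter (fun ℓ => ℓ.natDegree = 0) F, f ℓ = 1 := h0
  have hT1' : -(((q : ℝ) - 1) / (q : ℝ) ^ (t + 2))
      ≤ ∑ ℓ ∈ Finset.filter (fun ℓ => ℓ.natDegree = 1) F, f ℓ := hT1
  have htail' : -(1 / (Q * (Q - 1)))
      ≤ ∑ k ∈ Finset.Ico (1 + 1) (x₀ + 1),
          ∑ ℓ ∈ Finset.filter (fun ℓ => ℓ.natDegree = k) F, f ℓ := htail
  rw [key, Finset.range_eq_Ico, Finset.sum_eq_sum_Ico_succ_bot (Nat.succ_pos x₀)]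
  have hanonneg : (0 : ℝ) ≤ ((q : ℝ) - 1) / (q : ℝ) ^ (t + 2) :=
    div_nonneg (by linarith) (pow_pos hq0 _).le
  have hbnonneg : (0 : ℝ) ≤ 1 / (Q * (Q - 1)) := (one_div_pos.2 hQQpos).le
  rcases Nat.eq_zero_or_pos x₀ with rfl | hx₀
  · rw [show (0:ℕ) + 1 = 1 from rfl, show Finset.Ico 1 1 = ∅ from Finset.Ico_self 1,
      Finset.sum_empty, add_zero, h0']
    linarith
  · rw [Finset.sum_eq_sum_Ico_succ_bot (by omega : 1 < x₀ + 1), h0']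
    linarith
end

section
/- Let q be a prime and identify each f ∈ F_q((x^{-1})) with f = ∑_{k≥1} f_k x^{-k} (zero polynomial part) with the Hankel matrix C = (f_{i+j−1})_{i,j≥1} over F_q. Then for every n ∈ ℕ₀ with base-q digit vector n⃗ = (n_0, n_1, ...)ᵀ, the digit vector of the fractional part {n(x)·f(x)} (i.e., the coefficient sequence of x^{-1}, x^{-2}, ...) equals C·n⃗ computed over F_q. -/
open Finset

noncomputable def seqToLaurent (q : ℕ) (f : ℕ → ZMod q) : LaurentSeries (ZMod q) :=
  HahnSeries.ofPowerSeries ℤ (ZMod q)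
    (PowerSeries.mk fun k => if k = 0 then 0 else f (k - 1))

noncomputable def natPolyLaurent (q n : ℕ) : LaurentSeries (ZMod q) :=
  ∑ i ∈ Finset.range (n + 1), HahnSeries.single (-(i : ℤ)) ((n / q ^ i % q : ℕ) : ZMod q)

/-- The digit vector of the fractional part `{n(x)·f(x)}` equals the Hankel-matrix
product `C·n⃗` over `F_q`: for every `m`, the coefficient of `x^{-(m+1)}` of
`n(x)·f(x)` is `∑_i f_{(m+1)+i-1+1} · n_i = ∑_i C_{m+1,i+1} n_i`, where
`C = (f_{i+j-1})_{i,j ≥ 1}` is the Hankel matrix of `f` and `n_i` are the base-`q`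
digits of `n`. -/
theorem kronecker_is_digital (q : ℕ) (hq : q.Prime) (f : ℕ → ZMod q) (n m : ℕ) :
    (natPolyLaurent q n * seqToLaurent q f).coeff ((m : ℤ) + 1) =
      ∑ i ∈ Finset.range (n + 1), f (m + i) * ((n / q ^ i % q : ℕ) : ZMod q) := by
  rw [natPolyLaurent, Finset.sum_mul]
  rw [← HahnSeries.coeff.addMonoidHom_apply, map_sum]
  refine Finset.sum_congr rfl fun i hi => ?_
  have key : (m : ℤ) + 1 = ((m + i : ℕ) + 1) + -(i : ℤ) := by push_cast; ring
  rw [HahnSeries.coeff.addMonoidHom_apply, key, HahnSeries.coeff_single_mul_add]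
  have : ((m + i : ℕ) : ℤ) + 1 = ((m + i + 1 : ℕ) : ℤ) := by push_cast; ring
  rw [this, seqToLaurent, HahnSeries.ofPowerSeries_apply_coeff, PowerSeries.coeff_mk]
  simp [mul_comm]
end
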